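/- If a group G is finitely presented and S is a finite generating set of G, then G has S-bounded H²: the ℤG-module Z₁(Cay(G,S)) of integral 1-cycles on the Cayley graph is generated by a collection 𝒞 of cycles of bounded ℓ¹-norm, and there is a function Δ: ℕ → ℕ such that every integral 1-cycle of ℓ¹-norm at most n can be written as a sum Σ_{i=1}^k g_i c_i with c_i ∈ 𝒞, g_i ∈ G, and k ≤ Δ(n). -/

import Mathlib

open Finsupp

variable {V : Type*}

/-- 0-chains. -/
abbrev C0 (V : Type*) := V →₀ ℝ
/-- 1-chains: free real vector space on ordered pairs of vertices. -/
abbrev C1 (V : Type*) := (V × V) →₀ ℝ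
/-- 2-chains: free real vector space on ordered triples of vertices. -/
abbrev C2 (V : Type*) := (V × V × V) →₀ ℝ
/-- 3-chains. -/
abbrev C3 (V : Type*) := (V × V × V × V) →₀ ℝ

/-- ℓ¹-norm of a finitely supported chain. -/
noncomputable def l1 {α : Type*} (c : α →₀ ℝ) : ℝ := c.support.sum fun t => |c t|

/-- Boundary map ∂ : C₂ → C₁, (x₀,x₁,x₂) ↦ (x₁,x₂) − (x₀,x₂) + (x₀,x₁). -/
noncomputable def bdry2 : C2 V →ₗ[ℝ] C1 V :=
  Finsupp.lsum ℝ fun t => LinearMap.toSpanSingleton ℝ (C1 V)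
    (single (t.2.1, t.2.2) 1 - single (t.1, t.2.2) 1 + single (t.1, t.2.1) 1)

/-- Boundary map ∂ : C₁ → C₀, (x₀,x₁) ↦ x₁ − x₀. -/
noncomputable def bdry1 : C1 V →ₗ[ℝ] C0 V :=
  Finsupp.lsum ℝ fun t => LinearMap.toSpanSingleton ℝ (C0 V)
    (single t.2 1 - single t.1 1)

/-- Boundary map ∂ : C₃ → C₂. -/
noncomputable def bdry3 : C3 V →ₗ[ℝ] C2 V :=
  Finsupp.lsum ℝ fun t => LinearMap.toSpanSingleton ℝ (C2 V)
    (single (t.2.1, t.2.2.1, t.2.2.2) 1 - single (t.1, t.2.2.1, t.2.2.2) 1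
      + single (t.1, t.2.1, t.2.2.2) 1 - single (t.1, t.2.1, t.2.2.1) 1)

/-- Two vertices are at (finite) distance at most R. -/
def pairOK (G : SimpleGraph V) (R : ℕ) (a b : V) : Prop :=
  G.Reachable a b ∧ G.dist a b ≤ R

/-- Membership in C₁^R : supported on pairs at distance ≤ R. -/
def memC1R (G : SimpleGraph V) (R : ℕ) (c : C1 V) : Prop :=
  ∀ t ∈ c.support, pairOK G R t.1 t.2

/-- Membership in C₂^R : supported on triples of diameter ≤ R. -/
def memC2R (G : SimpleGraph V) (R : ℕ) (c : C2 V) : Prop :=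
  ∀ t ∈ c.support, pairOK G R t.1 t.2.1 ∧ pairOK G R t.1 t.2.2 ∧ pairOK G R t.2.1 t.2.2

/-- Membership in B₁^R = ∂C₂^R. -/
def memB1R (G : SimpleGraph V) (R : ℕ) (b : C1 V) : Prop :=
  ∃ a : C2 V, memC2R G R a ∧ bdry2 a = b

/-- The filling norm ‖b‖_F^R = inf of ℓ¹-norms of fillings in C₂^R. -/
noncomputable def fillNorm (G : SimpleGraph V) (R : ℕ) (b : C1 V) : ℝ :=
  sInf {r | ∃ a : C2 V, memC2R G R a ∧ bdry2 a = b ∧ r = l1 a}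

/-- The 1-chain c(p) associated to a walk p. -/
noncomputable def walkChain (G : SimpleGraph V) {x y : V} (p : G.Walk x y) : C1 V :=
  (p.darts.map fun d => single d.toProd (1 : ℝ)).sum

/-- A walk is geodesic if its length realizes the distance of its endpoints. -/
def IsGeodesicWalk (G : SimpleGraph V) {x y : V} (p : G.Walk x y) : Prop :=
  p.length = G.dist x y

/-- Geodesic triangles of G are n-slim. -/
def SlimTriangles (G : SimpleGraph V) (n : ℕ) : Prop :=
  ∀ (x y z : V) (p : G.Walk x y) (q : G.Walk y z) (r : G.Walk x z),
    IsGeodesicWalk G p → IsGeodesicWalk G q → IsGeodesicWalk G r →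
    (∀ v ∈ p.support, ∃ w, (w ∈ q.support ∨ w ∈ r.support) ∧ G.dist v w ≤ n) ∧
    (∀ v ∈ q.support, ∃ w, (w ∈ p.support ∨ w ∈ r.support) ∧ G.dist v w ≤ n) ∧
    (∀ v ∈ r.support, ∃ w, (w ∈ p.support ∨ w ∈ q.support) ∧ G.dist v w ≤ n)

/-- A real chain has integer coefficients. -/
def IntCoeffs {α : Type*} (c : α →₀ ℝ) : Prop := ∀ t, ∃ n : ℤ, c t = n

/-- X has a finite homological isoperimetric function with parameters R₀, θ :
for every closed path p, c(p) ∈ B₁^{R₀} and ‖c(p)‖_F^{R₀} ≤ θ(length p). -/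
def FinHomIsop (G : SimpleGraph V) (R₀ : ℕ) (θ : ℕ → ℝ) : Prop :=
  ∀ (x : V) (p : G.Walk x x), memB1R G R₀ (walkChain G p) ∧
    fillNorm G R₀ (walkChain G p) ≤ θ p.length

/-- A 2-cochain is bounded on each C₂^R. -/
def Bdd2 {W : Type*} [NormedAddCommGroup W] [NormedSpace ℝ W]
    (G : SimpleGraph V) (f : C2 V →ₗ[ℝ] W) : Prop :=
  ∀ R : ℕ, ∃ M : ℝ, ∀ c : C2 V, memC2R G R c → ‖f c‖ ≤ M * l1 c

/-- A 1-cochain is bounded on each C₁^R. -/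
def Bdd1 {W : Type*} [NormedAddCommGroup W] [NormedSpace ℝ W]
    (G : SimpleGraph V) (f : C1 V →ₗ[ℝ] W) : Prop :=
  ∀ R : ℕ, ∃ M : ℝ, ∀ c : C1 V, memC1R G R c → ‖f c‖ ≤ M * l1 c

/-- A Banach space is 1-injective: bounded linear maps into it extend from
subspaces of normed spaces with the same norm. -/
def IsOneInjective (W : Type*) [NormedAddCommGroup W] [NormedSpace ℝ W] : Prop :=
  ∀ (E : Type) [NormedAddCommGroup E] [NormedSpace ℝ E],
    ∀ (p : Subspace ℝ E) (φ : p →L[ℝ] W),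
      ∃ ψ : E →L[ℝ] W, (∀ x : p, ψ x = φ x) ∧ ‖ψ‖ ≤ ‖φ‖

/-- The Cayley graph of a group with respect to a generating set. -/
def cayley {G : Type*} [Group G] (S : Set G) : SimpleGraph G where
  Adj a b := a ≠ b ∧ ∃ s ∈ S, b = a * s ∨ a = b * s
  symm := by
    constructor
    rintro a b ⟨hne, s, hs, h⟩
    exact ⟨hne.symm, s, hs, h.symm⟩
  loopless := ⟨fun a h => h.1 rfl⟩

/-- Boundary map for integral 1-chains. -/
noncomputable def bdryZ {G : Type*} : ((G × G) →₀ ℤ) →ₗ[ℤ] (G →₀ ℤ) :=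
  Finsupp.lsum ℤ fun t => LinearMap.toSpanSingleton ℤ (G →₀ ℤ)
    (single t.2 1 - single t.1 1)

/-- ℓ¹-norm of an integral chain. -/
def l1Z {α : Type*} (c : α →₀ ℤ) : ℕ := c.support.sum fun t => (c t).natAbs

/-- An integral cellular 1-cycle on the Cayley graph: supported on edges,
with vanishing boundary. -/
def IsCycleZ {G : Type*} [Group G] (S : Set G) (c : (G × G) →₀ ℤ) : Prop :=
  (∀ t ∈ c.support, (cayley S).Adj t.1 t.2) ∧ bdryZ c = 0

/-- A group is finitely presented. -/
def IsFinitelyPresented (G : Type*) [Group G] : Prop :=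
  ∃ (n : ℕ) (rels : Set (FreeGroup (Fin n))),
    rels.Finite ∧ Nonempty (PresentedGroup rels ≃* G)

section SBA

variable {G : Type} [Group G]

abbrev C1Z (G : Type) := (G × G) →₀ ℤ

noncomputable def trE (g : G) : C1Z G →+ C1Z G :=
  Finsupp.mapDomain.addMonoidHom (fun t => (g * t.1, g * t.2))

lemma trE_apply (g : G) (c : C1Z G) :
    trE g c = Finsupp.mapDomain (fun t : G × G => (g * t.1, g * t.2)) c := rfl

lemma trE_single (g : G) (t : G × G) (k : ℤ) :
    trE g (single t k) = single (g * t.1, g * t.2) k := Finsupp.mapDomain_single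

lemma trE_trE (g h : G) (c : C1Z G) : trE g (trE h c) = trE (g * h) c := by
  rw [trE_apply, trE_apply, trE_apply, ← Finsupp.mapDomain_comp]
  congr 1
  funext t
  simp [Function.comp, mul_assoc]

lemma trE_one (c : C1Z G) : trE 1 c = c := by
  rw [trE_apply]
  simp only [one_mul]
  exact Finsupp.mapDomain_id

structure Cocy (G : Type) [Group G] where
  ch : C1Z G
  el : G

namespace Cocy

noncomputable instance : Mul (Cocy G) := ⟨fun a b => ⟨a.ch + trE a.el b.ch, a.el * b.el⟩⟩
noncomputable instance : One (Cocy G) := ⟨⟨0, 1⟩⟩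
noncomputable instance : Inv (Cocy G) := ⟨fun a => ⟨-(trE a.el⁻¹ a.ch), a.el⁻¹⟩⟩

lemma mul_def (a b : Cocy G) : a * b = ⟨a.ch + trE a.el b.ch, a.el * b.el⟩ := rfl
lemma one_def : (1 : Cocy G) = ⟨0, 1⟩ := rfl
lemma inv_def (a : Cocy G) : a⁻¹ = ⟨-(trE a.el⁻¹ a.ch), a.el⁻¹⟩ := rfl

noncomputable instance : Group (Cocy G) where
  mul_assoc a b c := by
    simp only [mul_def, map_add, trE_trE, add_assoc, mul_assoc]
  one_mul a := by simp [mul_def, one_def, trE_one]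
  mul_one a := by simp [mul_def, one_def]
  inv_mul_cancel a := by simp [mul_def, inv_def, one_def, trE_trE]

end Cocy

def sndHom (G : Type) [Group G] : Cocy G →* G where
  toFun := Cocy.el
  map_one' := rfl
  map_mul' _ _ := rfl

variable {ι : Type} (ν : ι → G)

noncomputable def ΘH : FreeGroup ι →* Cocy G :=
  FreeGroup.lift fun s => ⟨single (1, ν s) 1, ν s⟩

noncomputable def piH : FreeGroup ι →* G := FreeGroup.lift ν

noncomputable def th (w : FreeGroup ι) : C1Z G := (ΘH ν w).ch

lemma ΘH_el (w : FreeGroup ι) : (ΘH ν w).el = piH ν w := by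
  have h : (sndHom G).comp (ΘH ν) = piH ν := by
    apply FreeGroup.ext_hom
    intro a
    simp [ΘH, piH, sndHom, FreeGroup.lift_apply_of]
  exact DFunLike.congr_fun h w

lemma th_one : th ν 1 = 0 := by
  rw [th, map_one]; rfl

lemma th_of (s : ι) : th ν (FreeGroup.of s) = single (1, ν s) 1 := by
  rw [th, ΘH, FreeGroup.lift_apply_of]

lemma th_mul (u v : FreeGroup ι) :
    th ν (u * v) = th ν u + trE (piH ν u) (th ν v) := by
  rw [th, map_mul, Cocy.mul_def, ΘH_el]; rfl

lemma th_inv (w : FreeGroup ι) :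
    th ν w⁻¹ = -(trE (piH ν w)⁻¹ (th ν w)) := by
  rw [th, map_inv, Cocy.inv_def, ΘH_el]; rfl

noncomputable def tr0 (g : G) : (G →₀ ℤ) →+ (G →₀ ℤ) :=
  Finsupp.mapDomain.addMonoidHom (fun x => g * x)

lemma tr0_apply (g : G) (c : G →₀ ℤ) :
    tr0 g c = Finsupp.mapDomain (fun x => g * x) c := rfl

lemma bdryZ_single (t : G × G) (k : ℤ) :
    bdryZ (single t k) = k • (single t.2 1 - single t.1 1) := by
  rw [bdryZ, Finsupp.lsum_single]; rfl

lemma bdryZ_trE (g : G) (c : C1Z G) : bdryZ (trE g c) = tr0 g (bdryZ c) := by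
  have h : ((bdryZ : C1Z G →ₗ[ℤ] (G →₀ ℤ)).toAddMonoidHom.comp (trE g))
      = (tr0 g).comp (bdryZ : C1Z G →ₗ[ℤ] (G →₀ ℤ)).toAddMonoidHom := by
    apply Finsupp.addHom_ext
    intro t k
    simp only [AddMonoidHom.comp_apply, LinearMap.toAddMonoidHom_coe,
      trE_single, bdryZ_single, map_zsmul, map_sub, tr0_apply,
      Finsupp.mapDomain_single]
  exact DFunLike.congr_fun h c

lemma pure_eq_of (s : ι) : (pure s : FreeGroup ι) = FreeGroup.of s := rfl

lemma bdryZ_th (w : FreeGroup ι) :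
    bdryZ (th ν w) = single (piH ν w) 1 - single (1 : G) 1 := by
  induction w using FreeGroup.induction_on with
  | C1 => simp [th_one]
  | of s =>
      rw [th_of, bdryZ_single]
      simp [piH, FreeGroup.lift_apply_of]
  | inv_of s ih =>
      rw [th_inv, map_neg, bdryZ_trE, ih]
      simp only [map_sub, tr0_apply, Finsupp.mapDomain_single, map_one, mul_one, map_inv]
      simp [neg_sub]
  | mul u v hu hv =>
      rw [th_mul, map_add, bdryZ_trE, hu, hv]
      simp only [map_sub, tr0_apply, Finsupp.mapDomain_single, map_mul, mul_one]
      abel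

end SBA

section SBA2

open Finsupp

def l1Z' {α : Type*} (c : α →₀ ℤ) : ℕ := c.support.sum fun t => (c t).natAbs

variable {α : Type*}

lemma l1Z_eq_sum (c : α →₀ ℤ) {s : Finset α} (h : c.support ⊆ s) :
    l1Z' c = ∑ t ∈ s, (c t).natAbs :=
  Finset.sum_subset h fun t _ ht => by
    rw [Finsupp.notMem_support_iff.mp ht]; rfl

@[simp] lemma l1Z_zero : l1Z' (0 : α →₀ ℤ) = 0 := by simp [l1Z']

lemma l1Z_single (t : α) (k : ℤ) : l1Z' (single t k) = k.natAbs := by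
  classical
  by_cases hk : k = 0
  · simp [hk]
  · rw [l1Z', Finsupp.support_single_ne_zero _ hk]
    simp

lemma l1Z_neg (c : α →₀ ℤ) : l1Z' (-c) = l1Z' c := by
  simp [l1Z', Finsupp.support_neg]

lemma l1Z_add_le (a b : α →₀ ℤ) : l1Z' (a + b) ≤ l1Z' a + l1Z' b := by
  classical
  rw [l1Z_eq_sum (a + b) Finsupp.support_add,
    l1Z_eq_sum a (Finset.subset_union_left (s₂ := b.support)),
    l1Z_eq_sum b (Finset.subset_union_right (s₁ := a.support)),
    ← Finset.sum_add_distrib]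
  refine Finset.sum_le_sum fun t _ => ?_
  rw [Finsupp.add_apply]
  exact Int.natAbs_add_le _ _

lemma l1Z_sub_le (a b : α →₀ ℤ) : l1Z' (a - b) ≤ l1Z' a + l1Z' b := by
  rw [sub_eq_add_neg]
  simpa [l1Z_neg] using l1Z_add_le a (-b)

lemma l1Z_eq_zero {c : α →₀ ℤ} (h : l1Z' c = 0) : c = 0 := by
  ext t
  simp only [Finsupp.coe_zero, Pi.zero_apply]
  by_cases ht : t ∈ c.support
  · have := (Finset.sum_eq_zero_iff.mp h) t ht
    omega
  · simpa using Finsupp.notMem_support_iff.mp ht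

lemma l1Z_erase (c : α →₀ ℤ) (t : α) :
    l1Z' (c.erase t) + (c t).natAbs = l1Z' c := by
  classical
  by_cases ht : t ∈ c.support
  · rw [l1Z', l1Z', Finsupp.support_erase, ← Finset.sum_erase_add c.support _ ht]
    congr 1
    refine Finset.sum_congr rfl fun u hu => ?_
    rw [Finsupp.erase_ne (Finset.ne_of_mem_erase hu)]
  · have h0 : c t = 0 := Finsupp.notMem_support_iff.mp ht
    have : c.erase t = c := by
      ext u
      rcases eq_or_ne u t with rfl | hu
      · simp [h0]
      · rw [Finsupp.erase_ne hu]
    rw [this, h0]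
    simp

lemma l1Z_sub_one {c : α →₀ ℤ} {t : α} (h : 1 ≤ c t) :
    l1Z' (c - single t 1) + 1 ≤ l1Z' c := by
  have h1 : c - single t 1 = c.erase t + single t (c t - 1) := by
    rw [Finsupp.erase_eq_sub_single, Finsupp.single_sub]
    abel
  have h2 : l1Z' (c - single t 1) ≤ l1Z' (c.erase t) + (c t - 1).natAbs := by
    rw [h1]
    exact le_trans (l1Z_add_le _ _) (by rw [l1Z_single])
  have h3 := l1Z_erase c t
  omega

lemma l1Z_add_one {c : α →₀ ℤ} {t : α} (h : c t ≤ -1) :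
    l1Z' (c + single t 1) + 1 ≤ l1Z' c := by
  have h1 : c + single t 1 = c.erase t + single t (c t + 1) := by
    rw [Finsupp.erase_eq_sub_single, Finsupp.single_add]
    abel
  have h2 : l1Z' (c + single t 1) ≤ l1Z' (c.erase t) + (c t + 1).natAbs := by
    rw [h1]
    exact le_trans (l1Z_add_le _ _) (by rw [l1Z_single])
  have h3 := l1Z_erase c t
  omega

end SBA2

section SBA3

open Finsupp

variable {G : Type} [Group G] {ι : Type}

lemma mul_pair_injective (g : G) :
    Function.Injective (fun t : G × G => (g * t.1, g * t.2)) := by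
  intro a b h
  simp only [Prod.mk.injEq, Prod.ext_iff] at h ⊢
  exact ⟨mul_left_cancel h.1, mul_left_cancel h.2⟩

lemma l1Z_trE (g : G) (c : C1Z G) : l1Z' (trE g c) = l1Z' c := by
  classical
  rw [l1Z', l1Z', trE_apply,
    Finsupp.mapDomain_support_of_injOn c ((mul_pair_injective g).injOn)]
  rw [Finset.sum_image fun a _ b _ h => mul_pair_injective g h]
  refine Finset.sum_congr rfl fun t _ => ?_
  rw [Finsupp.mapDomain_apply (mul_pair_injective g)]

variable (ν : ι → G)

/-- positively oriented chains -/
def posOr (c : C1Z G) : Prop := ∀ t ∈ c.support, ∃ s : ι, t.2 = t.1 * ν s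

lemma posOr_zero : posOr ν (0 : C1Z G) := by intro t ht; simp at ht

lemma posOr_th (w : FreeGroup ι) : posOr ν (th ν w) := by
  induction w using FreeGroup.induction_on with
  | C1 => rw [th_one]; exact posOr_zero ν
  | of s =>
      intro t ht
      rw [th_of] at ht
      have := Finsupp.support_single_subset ht
      simp only [Finset.mem_singleton] at this
      subst this
      exact ⟨s, (one_mul _).symm⟩
  | inv_of s ih =>
      intro t ht
      rw [th_inv] at ht
      rw [Finsupp.support_neg] at ht
      rw [th_of, trE_single] at ht
      have := Finsupp.support_single_subset ht
      simp only [Finset.mem_singleton] at this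
      subst this
      exact ⟨s, by simp⟩
  | mul u v hu hv =>
      classical
      intro t ht
      rw [th_mul] at ht
      rcases Finset.mem_union.mp (Finsupp.support_add ht) with h | h
      · exact hu t h
      · rw [trE_apply] at h
        have := Finsupp.mapDomain_support h
        simp only [Finset.mem_image] at this
        obtain ⟨u', hu', rfl⟩ := this
        obtain ⟨s, hs⟩ := hv u' hu'
        exact ⟨s, by simp [hs, mul_assoc]⟩

lemma posOr_trE {c : C1Z G} (g : G) (h : posOr ν c) : posOr ν (trE g c) := by
  classical
  intro t ht
  rw [trE_apply] at ht
  have := Finsupp.mapDomain_support ht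
  simp only [Finset.mem_image] at this
  obtain ⟨u, hu, rfl⟩ := this
  obtain ⟨s, hs⟩ := h u hu
  exact ⟨s, by simp [hs, mul_assoc]⟩

lemma posOr_add {a b : C1Z G} (ha : posOr ν a) (hb : posOr ν b) : posOr ν (a + b) := by
  classical
  intro t ht
  rcases Finset.mem_union.mp (Finsupp.support_add ht) with h | h
  · exact ha t h
  · exact hb t h

lemma posOr_sub {a b : C1Z G} (ha : posOr ν a) (hb : posOr ν b) : posOr ν (a - b) := by
  classical
  intro t ht
  rcases Finset.mem_union.mp (Finsupp.support_sub ht) with h | h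
  · exact ha t h
  · exact hb t h

lemma posOr_neg {a : C1Z G} (ha : posOr ν a) : posOr ν (-a) := by
  intro t ht
  rw [Finsupp.support_neg] at ht
  exact ha t ht

lemma bdryZ_eq_sum (c : C1Z G) :
    bdryZ c = ∑ t ∈ c.support, c t • ((single t.2 1 : G →₀ ℤ) - single t.1 1) := by
  rw [bdryZ, Finsupp.lsum_apply, Finsupp.sum]
  rfl

lemma exists_outgoing (c : C1Z G) (hl : ∀ t ∈ c.support, t.1 ≠ t.2) {a : G}
    (h : (bdryZ c) a < 0) :
    ∃ t ∈ c.support, (t.1 = a ∧ 0 < c t) ∨ (t.2 = a ∧ c t < 0) := by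
  classical
  by_contra hcon
  push_neg at hcon
  have h0 : 0 ≤ (bdryZ c) a := by
    rw [bdryZ_eq_sum, Finsupp.finset_sum_apply]
    apply Finset.sum_nonneg
    intro t ht
    have hne := hl t ht
    have hc := hcon t ht
    simp only [Finsupp.smul_apply, Finsupp.sub_apply, smul_eq_mul]
    rw [Finsupp.single_apply, Finsupp.single_apply]
    rcases eq_or_ne t.2 a with h2 | h2 <;> rcases eq_or_ne t.1 a with h1 | h1
    · exact absurd (h1.trans h2.symm) hne
    · simp only [if_pos h2, if_neg h1]
      simpa using hc.2 h2
    · simp only [if_neg h2, if_pos h1]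
      simpa using hc.1 h1
    · simp [if_neg h1, if_neg h2]
  omega

end SBA3

section SBA4

open Finsupp

variable {G : Type} [Group G] {ι : Type} (ν : ι → G)

lemma mk_single_true (s : ι) : FreeGroup.mk [(s, true)] = FreeGroup.of s := rfl

lemma mk_single_false (s : ι) : FreeGroup.mk [(s, false)] = (FreeGroup.of s)⁻¹ := by
  rw [show FreeGroup.of s = FreeGroup.mk [(s, true)] from rfl, FreeGroup.inv_mk]
  simp [FreeGroup.invRev]

lemma mk_cons (e : ι × Bool) (l : List (ι × Bool)) :
    FreeGroup.mk (e :: l) = FreeGroup.mk [e] * FreeGroup.mk l := by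
  rw [FreeGroup.mul_mk]
  rfl

lemma piH_of (s : ι) : piH ν (FreeGroup.of s) = ν s := FreeGroup.lift_apply_of

lemma th_letter_false (s : ι) :
    th ν (FreeGroup.mk [(s, false)]) = -single ((ν s)⁻¹, (1 : G)) 1 := by
  rw [mk_single_false, th_inv, th_of, piH_of, trE_single]
  simp

lemma posOr_single {t : G × G} (s : ι) (hs : t.2 = t.1 * ν s) (k : ℤ) :
    posOr ν (single t k) := by
  intro u hu
  have := Finsupp.support_single_subset hu
  simp only [Finset.mem_singleton] at this
  subst this
  exact ⟨s, hs⟩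

lemma one_eq_mk_nil : (1 : FreeGroup ι) = FreeGroup.mk [] := FreeGroup.one_eq_mk

lemma path_extract (hν : ∀ s, ν s ≠ 1) :
    ∀ N : ℕ, ∀ c : C1Z G, ∀ a b : G, posOr ν c →
      bdryZ c = single b 1 - single a 1 → l1Z' c ≤ N →
      ∃ l : List (ι × Bool), a * piH ν (FreeGroup.mk l) = b ∧
        l1Z' (c - trE a (th ν (FreeGroup.mk l))) + l.length ≤ l1Z' c := by
  classical
  intro N
  induction N with
  | zero =>
      intro c a b hpos hb hN
      have hc0 : c = 0 := l1Z_eq_zero (Nat.le_zero.mp hN)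
      subst hc0
      have hab : a = b := by
        rw [map_zero] at hb
        by_contra hab
        have hx := congrArg (fun f => f b) hb
        simp only [Finsupp.coe_zero, Pi.zero_apply, Finsupp.sub_apply] at hx
        rw [Finsupp.single_apply, Finsupp.single_apply, if_pos rfl, if_neg hab] at hx
        omega
      refine ⟨[], ?_, ?_⟩
      · rw [← one_eq_mk_nil, map_one, mul_one, hab]
      · rw [← one_eq_mk_nil, th_one, map_zero, sub_zero]
        simp
  | succ N ih =>
      intro c a b hpos hb hN
      by_cases hab : a = b
      · refine ⟨[], ?_, ?_⟩
        · rw [← one_eq_mk_nil, map_one, mul_one, hab]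
        · rw [← one_eq_mk_nil, th_one, map_zero, sub_zero]
          simp
      · have hba : (bdryZ c) a < 0 := by
          rw [hb]
          rw [Finsupp.sub_apply, Finsupp.single_apply, Finsupp.single_apply,
            if_pos rfl, if_neg (Ne.symm hab)]
          omega
        have hloop : ∀ t ∈ c.support, t.1 ≠ t.2 := by
          intro t ht h12
          obtain ⟨s, hs⟩ := hpos t ht
          rw [← h12] at hs
          exact hν s (left_eq_mul.mp hs)
        obtain ⟨t, ht, hcase⟩ := exists_outgoing c hloop hba
        obtain ⟨s, hs⟩ := hpos t ht
        rcases hcase with ⟨ht1, hgt⟩ | ⟨ht2, hlt⟩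
        · -- outgoing edge t = (a, t.2), traverse forward
          set c₂ := c - single t 1 with hc₂
          have hposc₂ : posOr ν c₂ := posOr_sub ν hpos (posOr_single ν s hs 1)
          have hbdry₂ : bdryZ c₂ = single b 1 - single t.2 1 := by
            rw [hc₂, map_sub, hb, bdryZ_single, ht1, one_smul]
            abel
          have hl1₂ : l1Z' c₂ + 1 ≤ l1Z' c := l1Z_sub_one (by omega)
          obtain ⟨l', hπ', hlen'⟩ := ih c₂ t.2 b hposc₂ hbdry₂ (by omega)
          refine ⟨(s, true) :: l', ?_, ?_⟩
          · rw [mk_cons, map_mul, mk_single_true, piH_of, ← mul_assoc,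
              show a * ν s = t.2 by rw [hs, ht1]]
            exact hπ'
          · have hchain : trE a (th ν (FreeGroup.mk ((s, true) :: l')))
                = single t 1 + trE t.2 (th ν (FreeGroup.mk l')) := by
              rw [mk_cons, mk_single_true, th_mul, map_add, th_of, piH_of,
                trE_single, trE_trE]
              rw [show a * ν s = t.2 by rw [hs, ht1], mul_one, ← ht1, Prod.mk.eta]
            rw [hchain, show c - (single t 1 + trE t.2 (th ν (FreeGroup.mk l')))
              = c₂ - trE t.2 (th ν (FreeGroup.mk l')) by rw [hc₂]; abel]
            simp only [List.length_cons]
            omega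
        · -- incoming edge t = (t.1, a), traverse backwards
          have ht1 : t.1 = a * (ν s)⁻¹ := by
            rw [← ht2, hs]
            group
          set c₂ := c + single t 1 with hc₂
          have hposc₂ : posOr ν c₂ := posOr_add ν hpos (posOr_single ν s hs 1)
          have hbdry₂ : bdryZ c₂ = single b 1 - single t.1 1 := by
            rw [hc₂, map_add, hb, bdryZ_single, ht2, one_smul]
            abel
          have hl1₂ : l1Z' c₂ + 1 ≤ l1Z' c := l1Z_add_one (by omega)
          obtain ⟨l', hπ', hlen'⟩ := ih c₂ t.1 b hposc₂ hbdry₂ (by omega)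
          refine ⟨(s, false) :: l', ?_, ?_⟩
          · rw [mk_cons, map_mul, mk_single_false, map_inv, piH_of, ← mul_assoc,
              ← ht1]
            exact hπ'
          · have hchain : trE a (th ν (FreeGroup.mk ((s, false) :: l')))
                = -single t 1 + trE t.1 (th ν (FreeGroup.mk l')) := by
              rw [mk_cons, th_mul, th_letter_false, mk_single_false, map_inv, piH_of]
              rw [map_add, map_neg, trE_single, trE_trE, ← ht1, mul_one, ← ht2,
                Prod.mk.eta]
            rw [hchain, show c - (-single t 1 + trE t.1 (th ν (FreeGroup.mk l')))
              = c₂ - trE t.1 (th ν (FreeGroup.mk l')) by rw [hc₂]; abel]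
            simp only [List.length_cons]
            omega

end SBA4

section SBA5

open Finsupp

variable {G : Type} [Group G] {ι : Type} (ν : ι → G)

lemma loop_extract (hν : ∀ s, ν s ≠ 1) (c : C1Z G) (hpos : posOr ν c)
    (hb : bdryZ c = 0) (hc : c ≠ 0) :
    ∃ (g : G) (l : List (ι × Bool)), 1 ≤ l.length ∧ piH ν (FreeGroup.mk l) = 1 ∧
      l1Z' (c - trE g (th ν (FreeGroup.mk l))) + l.length ≤ l1Z' c := by
  obtain ⟨t, ht⟩ : ∃ t, t ∈ c.support := Finsupp.support_nonempty_iff.mpr hc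
  obtain ⟨s, hs⟩ := hpos t ht
  have htne : c t ≠ 0 := Finsupp.mem_support_iff.mp ht
  rcases lt_or_gt_of_ne htne with hlt | hgt
  · -- c t < 0 : traverse backwards from t.2, then path from t.1 back to t.2
    set c₂ := c + single t 1 with hc₂
    have hposc₂ : posOr ν c₂ := posOr_add ν hpos (posOr_single ν s hs 1)
    have hbdry₂ : bdryZ c₂ = single t.2 1 - single t.1 1 := by
      rw [hc₂, map_add, hb, bdryZ_single, one_smul, zero_add]
    have hl1₂ : l1Z' c₂ + 1 ≤ l1Z' c := l1Z_add_one (by omega)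
    obtain ⟨l', hπ', hlen'⟩ := path_extract ν hν (l1Z' c₂) c₂ t.1 t.2 hposc₂ hbdry₂ le_rfl
    refine ⟨t.2, (s, false) :: l', by simp, ?_, ?_⟩
    · rw [mk_cons, map_mul, mk_single_false, map_inv, piH_of]
      have h1 : t.2 * ((ν s)⁻¹ * piH ν (FreeGroup.mk l')) = t.2 * 1 := by
        rw [mul_one, ← mul_assoc, show t.2 * (ν s)⁻¹ = t.1 by rw [hs]; group, hπ']
      exact mul_left_cancel h1
    · have hchain : trE t.2 (th ν (FreeGroup.mk ((s, false) :: l')))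
          = -single t 1 + trE t.1 (th ν (FreeGroup.mk l')) := by
        rw [mk_cons, th_mul, th_letter_false, mk_single_false, map_inv, piH_of]
        rw [map_add, map_neg, trE_single, trE_trE,
          show t.2 * (ν s)⁻¹ = t.1 by rw [hs]; group, mul_one, Prod.mk.eta]
      rw [hchain, show c - (-single t 1 + trE t.1 (th ν (FreeGroup.mk l')))
        = c₂ - trE t.1 (th ν (FreeGroup.mk l')) by rw [hc₂]; abel]
      simp only [List.length_cons]
      omega
  · -- c t > 0 : traverse forward from t.1, then path from t.2 back to t.1
    set c₂ := c - single t 1 with hc₂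
    have hposc₂ : posOr ν c₂ := posOr_sub ν hpos (posOr_single ν s hs 1)
    have hbdry₂ : bdryZ c₂ = single t.1 1 - single t.2 1 := by
      rw [hc₂, map_sub, hb, bdryZ_single, one_smul, zero_sub, neg_sub]
    have hl1₂ : l1Z' c₂ + 1 ≤ l1Z' c := l1Z_sub_one (by omega)
    obtain ⟨l', hπ', hlen'⟩ := path_extract ν hν (l1Z' c₂) c₂ t.2 t.1 hposc₂ hbdry₂ le_rfl
    refine ⟨t.1, (s, true) :: l', by simp, ?_, ?_⟩
    · rw [mk_cons, map_mul, mk_single_true, piH_of]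
      have h1 : t.1 * (ν s * piH ν (FreeGroup.mk l')) = t.1 * 1 := by
        rw [mul_one, ← mul_assoc, ← hs, hπ']
      exact mul_left_cancel h1
    · have hchain : trE t.1 (th ν (FreeGroup.mk ((s, true) :: l')))
          = single t 1 + trE t.2 (th ν (FreeGroup.mk l')) := by
        rw [mk_cons, mk_single_true, th_mul, map_add, th_of, piH_of,
          trE_single, trE_trE, ← hs, mul_one, Prod.mk.eta]
      rw [hchain, show c - (single t 1 + trE t.2 (th ν (FreeGroup.mk l')))
        = c₂ - trE t.2 (th ν (FreeGroup.mk l')) by rw [hc₂]; abel]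
      simp only [List.length_cons]
      omega

lemma decomp (hν : ∀ s, ν s ≠ 1) :
    ∀ n : ℕ, ∀ c : C1Z G, posOr ν c → bdryZ c = 0 → l1Z' c ≤ n →
      ∃ W : List (G × List (ι × Bool)), W.length ≤ n ∧
        (∀ w ∈ W, (w.2).length ≤ n ∧ piH ν (FreeGroup.mk w.2) = 1) ∧
        c = (W.map fun w => trE w.1 (th ν (FreeGroup.mk w.2))).sum := by
  intro n
  induction n with
  | zero =>
      intro c _ _ hn
      refine ⟨[], le_rfl, by simp, ?_⟩
      rw [l1Z_eq_zero (Nat.le_zero.mp hn)]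
      simp
  | succ n ih =>
      intro c hpos hb hn
      by_cases hc : c = 0
      · exact ⟨[], by simp, by simp, by simp [hc]⟩
      · obtain ⟨g, l, hl1, hπ, hlen⟩ := loop_extract ν hν c hpos hb hc
        set c₂ := c - trE g (th ν (FreeGroup.mk l)) with hc₂
        have hpos₂ : posOr ν c₂ :=
          posOr_sub ν hpos (posOr_trE ν g (posOr_th ν _))
        have hb₂ : bdryZ c₂ = 0 := by
          rw [hc₂, map_sub, hb, bdryZ_trE, bdryZ_th, hπ]
          simp
        have hn₂ : l1Z' c₂ ≤ n := by omega
        obtain ⟨W', hW'len, hW'mem, hW'sum⟩ := ih c₂ hpos₂ hb₂ hn₂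
        refine ⟨(g, l) :: W', by simpa using hW'len, ?_, ?_⟩
        · intro w hw
          rcases List.mem_cons.mp hw with rfl | hw
          · refine ⟨?_, hπ⟩
            show l.length ≤ n + 1
            omega
          · obtain ⟨h1, h2⟩ := hW'mem w hw
            exact ⟨by omega, h2⟩
        · rw [List.map_cons, List.sum_cons, ← hW'sum, hc₂]
          abel

end SBA5

section SBA6

open Finsupp

variable {G : Type} [Group G] {ι : Type} (ν : ι → G)

noncomputable def swpC (x : G) : C1Z G :=
  single ((1 : G), x) 1 + single (x, (1 : G)) 1

open scoped Classical in
noncomputable def badM (c : C1Z G) : ℕ :=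
  ∑ t ∈ c.support, if ∃ s : ι, t.2 = t.1 * ν s then 0 else (c t).natAbs

open scoped Classical in
lemma badM_eq_sum (c : C1Z G) {s : Finset (G × G)} (h : c.support ⊆ s) :
    badM ν c = ∑ t ∈ s, if ∃ s' : ι, t.2 = t.1 * ν s' then 0 else (c t).natAbs := by
  rw [badM]
  refine Finset.sum_subset h fun t _ ht => ?_
  rw [Finsupp.notMem_support_iff.mp ht]
  simp

lemma badM_le_l1Z (c : C1Z G) : badM ν c ≤ l1Z' c := by
  classical
  refine Finset.sum_le_sum fun t _ => ?_
  split <;> omega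

lemma sum_replicate_swap (g : G) (k : ℤ) (x : C1Z G) :
    ((List.replicate k.natAbs ((g, if 0 ≤ k then x else -x))).map
      fun p => trE p.1 p.2).sum = k • trE g x := by
  rw [List.map_replicate, List.sum_replicate]
  show k.natAbs • trE g (if 0 ≤ k then x else -x) = k • trE g x
  rcases le_or_gt 0 k with hk | hk
  · rw [if_pos hk, ← natCast_zsmul, Int.natAbs_of_nonneg hk]
  · rw [if_neg (not_le.mpr hk), map_neg, smul_neg, ← natCast_zsmul,
      Int.ofNat_natAbs_of_nonpos hk.le]
    simp

lemma orient (hν : ∀ s, ν s ≠ 1) :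
    ∀ (B : ℕ) (c : C1Z G),
      (∀ t ∈ c.support, (∃ s : ι, t.2 = t.1 * ν s) ∨ (∃ s : ι, t.1 = t.2 * ν s)) →
      badM ν c = B →
      ∃ (c' : C1Z G) (SW : List (G × C1Z G)),
        posOr ν c' ∧ l1Z' c' ≤ l1Z' c ∧ SW.length ≤ badM ν c ∧
        (∀ x ∈ SW, ∃ s : ι, x.2 = swpC (ν s) ∨ x.2 = -swpC (ν s)) ∧
        c = c' + (SW.map fun x => trE x.1 x.2).sum := by
  classical
  intro B
  induction B using Nat.strong_induction_on with
  | _ B ih =>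
    intro c hadj hB
    by_cases hgood : ∀ t ∈ c.support, ∃ s : ι, t.2 = t.1 * ν s
    · exact ⟨c, [], hgood, le_rfl, by simp, by simp, by simp⟩
    · push_neg at hgood
      obtain ⟨t, ht, hbad0⟩ := hgood
      have hbad : ¬∃ s : ι, t.2 = t.1 * ν s := not_exists.mpr hbad0
      obtain ⟨s, hs⟩ := (hadj t ht).resolve_left hbad
      have ht12 : t.1 ≠ t.2 := by
        intro h12
        rw [h12] at hs
        exact hν s (left_eq_mul.mp hs)
      have hne : (t.2, t.1) ≠ t := fun h => ht12 (congrArg Prod.fst h).symm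
      set k := c t with hk
      have hk0 : k ≠ 0 := Finsupp.mem_support_iff.mp ht
      set σ : C1Z G := trE t.2 (swpC (ν s)) with hσ
      have hσ_eq : σ = single (t.2, t.1) 1 + single t 1 := by
        rw [hσ, swpC, map_add, trE_single, trE_single,
          show t.2 * ν s = t.1 from hs.symm]
        simp only [mul_one, Prod.mk.eta]
      set c₂ : C1Z G := c.erase t - single (t.2, t.1) k with hc₂
      have hdec : c = c₂ + k • σ := by
        rw [hc₂, hσ_eq, Finsupp.erase_eq_sub_single, ← hk, smul_add,
          Finsupp.smul_single, Finsupp.smul_single]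
        simp only [smul_eq_mul, mul_one]
        abel
      have hc₂t : c₂ t = 0 := by
        rw [hc₂, Finsupp.sub_apply, Finsupp.erase_same, Finsupp.single_apply,
          if_neg hne]
        simp
      have hc₂u : ∀ u : G × G, u ≠ t → u ≠ (t.2, t.1) → c₂ u = c u := by
        intro u hut hu21
        rw [hc₂, Finsupp.sub_apply, Finsupp.erase_ne hut, Finsupp.single_apply,
          if_neg (Ne.symm hu21)]
        simp
      have hsupp₂ : c₂.support ⊆ c.support ∪ {(t.2, t.1)} := by
        intro u hu
        by_cases h1 : u = (t.2, t.1)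
        · simp [h1]
        · by_cases h2 : u = t
          · subst h2
            exact absurd hc₂t (Finsupp.mem_support_iff.mp hu)
          · refine Finset.mem_union_left _ ?_
            rw [Finsupp.mem_support_iff, ← hc₂u u h2 h1]
            exact Finsupp.mem_support_iff.mp hu
      have hadj₂ : ∀ u ∈ c₂.support,
          (∃ s' : ι, u.2 = u.1 * ν s') ∨ (∃ s' : ι, u.1 = u.2 * ν s') := by
        intro u hu
        rcases Finset.mem_union.mp (hsupp₂ hu) with h | h
        · exact hadj u h
        · simp only [Finset.mem_singleton] at h
          subst h
          exact Or.inl ⟨s, hs⟩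
      have hgood21 : ∃ s' : ι, (t.2, t.1).2 = (t.2, t.1).1 * ν s' := ⟨s, hs⟩
      -- badM bookkeeping
      have hBsum : badM ν c₂ + k.natAbs = badM ν c := by
        have hsc : c.support ⊆ c.support ∪ {(t.2, t.1)} := Finset.subset_union_left
        have htmem : t ∈ c.support ∪ {(t.2, t.1)} := Finset.mem_union_left _ ht
        rw [badM_eq_sum ν c₂ hsupp₂, badM_eq_sum ν c hsc,
          ← Finset.sum_erase_add _ _ htmem, ← Finset.sum_erase_add _ _ htmem]
        have he : ∀ u ∈ (c.support ∪ {(t.2, t.1)}).erase t,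
            (if ∃ s' : ι, u.2 = u.1 * ν s' then 0 else (c₂ u).natAbs)
              = (if ∃ s' : ι, u.2 = u.1 * ν s' then 0 else (c u).natAbs) := by
          intro u hu
          by_cases h1 : u = (t.2, t.1)
          · subst h1
            rw [if_pos hgood21, if_pos hgood21]
          · rw [hc₂u u (Finset.ne_of_mem_erase hu) h1]
        rw [Finset.sum_congr rfl he, if_neg hbad, if_neg hbad, hc₂t]
        simp [hk]
      have hl1₂ : l1Z' c₂ ≤ l1Z' c := by
        have h1 : l1Z' c₂ ≤ l1Z' (c.erase t) + (single (t.2, t.1) k : C1Z G).support.sum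
            (fun u => ((single (t.2, t.1) k : C1Z G) u).natAbs) := by
          rw [hc₂]
          exact le_trans (l1Z_sub_le _ _) (by rfl)
        have h2 := l1Z_single ((t.2, t.1)) k
        have h3 := l1Z_erase c t
        rw [show (single (t.2, t.1) k : C1Z G).support.sum
            (fun u => ((single (t.2, t.1) k : C1Z G) u).natAbs) = l1Z' (single (t.2, t.1) k) from rfl, h2] at h1
        omega
      obtain ⟨c', SW', hpos', hl1', hSWlen', hSWmem', heq'⟩ :=
        ih (badM ν c₂) (by omega) c₂ hadj₂ rfl
      refine ⟨c', List.replicate k.natAbs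
        (t.2, if 0 ≤ k then swpC (ν s) else -swpC (ν s)) ++ SW', hpos', le_trans hl1' hl1₂,
        ?_, ?_, ?_⟩
      · rw [List.length_append, List.length_replicate]
        omega
      · intro x hx
        rcases List.mem_append.mp hx with hx | hx
        · have := List.eq_of_mem_replicate hx
          subst this
          refine ⟨s, ?_⟩
          split
          · exact Or.inl rfl
          · exact Or.inr rfl
        · exact hSWmem' x hx
      · rw [List.map_append, List.sum_append, sum_replicate_swap, hdec, heq']
        abel

end SBA6

section SBA7

open Finsupp

variable {G : Type} [Group G] {ι : Type} (ν : ι → G)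

lemma th_conj (u r : FreeGroup ι) (hr : piH ν r = 1) :
    th ν (u * r * u⁻¹) = trE (piH ν u) (th ν r) := by
  rw [th_mul, th_mul, th_inv, map_mul, hr, mul_one, map_neg, trE_trE,
    mul_inv_cancel, trE_one]
  abel

lemma th_list_prod (L : List (FreeGroup ι)) (h : ∀ x ∈ L, piH ν x = 1) :
    th ν L.prod = (L.map (th ν)).sum := by
  induction L with
  | nil => simp [th_one]
  | cons x L ih =>
      rw [List.prod_cons, th_mul, h x (List.mem_cons_self), trE_one,
        List.map_cons, List.sum_cons, ih fun y hy => h y (List.mem_cons_of_mem x hy)]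

lemma mem_normalClosure_list {R : Set (FreeGroup ι)} {w : FreeGroup ι}
    (h : w ∈ Subgroup.normalClosure R) :
    ∃ L : List (FreeGroup ι),
      (∀ x ∈ L, ∃ (u r : FreeGroup ι), r ∈ R ∧ (x = u * r * u⁻¹ ∨ x = u * r⁻¹ * u⁻¹)) ∧
      L.prod = w := by
  have h' : w ∈ Subgroup.closure (Group.conjugatesOfSet R) := h
  rw [← Subgroup.mem_toSubmonoid, Subgroup.closure_toSubmonoid] at h'
  obtain ⟨L, hL, hprod⟩ := Submonoid.exists_list_of_mem_closure h'
  refine ⟨L, ?_, hprod⟩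
  intro x hx
  rcases hL x hx with hx' | hx'
  · obtain ⟨r, hr, hconj⟩ := Group.mem_conjugatesOfSet_iff.mp hx'
    obtain ⟨u, hu⟩ := isConj_iff.mp hconj
    exact ⟨u, r, hr, Or.inl hu.symm⟩
  · obtain ⟨r, hr, hconj⟩ := Group.mem_conjugatesOfSet_iff.mp (Set.mem_inv.mp hx')
    obtain ⟨u, hu⟩ := isConj_iff.mp hconj
    refine ⟨u, r, hr, Or.inr ?_⟩
    have : x⁻¹ = u * r * u⁻¹ := hu.symm
    rw [← inv_inv x, this]
    group

lemma ker_change_gens {κ : Type} (φ : FreeGroup κ →* G) (π : FreeGroup ι →* G)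
    (hφ : Function.Surjective φ) (hπ : Function.Surjective π)
    (rels : Set (FreeGroup κ)) (hker : φ.ker = Subgroup.normalClosure rels) :
    ∃ (α : FreeGroup κ →* FreeGroup ι) (β : FreeGroup ι →* FreeGroup κ),
      π.ker = Subgroup.normalClosure
        ((α '' rels) ∪
          Set.range fun s : ι => FreeGroup.of s * (α (β (FreeGroup.of s)))⁻¹) := by
  classical
  set α : FreeGroup κ →* FreeGroup ι :=
    FreeGroup.lift fun i => Classical.choose (hπ (φ (FreeGroup.of i))) with hαdef
  set β : FreeGroup ι →* FreeGroup κ :=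
    FreeGroup.lift fun s => Classical.choose (hφ (π (FreeGroup.of s))) with hβdef
  have hα : ∀ x, π (α x) = φ x := by
    intro x
    have : π.comp α = φ := by
      apply FreeGroup.ext_hom
      intro a
      simp only [MonoidHom.comp_apply, hαdef, FreeGroup.lift_apply_of]
      exact Classical.choose_spec (hπ (φ (FreeGroup.of a)))
    exact DFunLike.congr_fun this x
  have hβ : ∀ x, φ (β x) = π x := by
    intro x
    have : φ.comp β = π := by
      apply FreeGroup.ext_hom
      intro a
      simp only [MonoidHom.comp_apply, hβdef, FreeGroup.lift_apply_of]
      exact Classical.choose_spec (hφ (π (FreeGroup.of a)))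
    exact DFunLike.congr_fun this x
  refine ⟨α, β, ?_⟩
  set N := Subgroup.normalClosure
    ((α '' rels) ∪ Set.range fun s : ι => FreeGroup.of s * (α (β (FreeGroup.of s)))⁻¹) with hN
  have hT : ∀ w : FreeGroup ι, w * (α (β w))⁻¹ ∈ N := by
    intro w
    have hw : w ∈ Subgroup.closure (Set.range (FreeGroup.of : ι → FreeGroup ι)) := by
      rw [FreeGroup.closure_range_of]
      trivial
    refine Subgroup.closure_induction
      (p := fun x _ => x * (α (β x))⁻¹ ∈ N) ?_ ?_ ?_ ?_ hw
    · rintro x ⟨s, rfl⟩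
      exact Subgroup.subset_normalClosure (Or.inr ⟨s, rfl⟩)
    · simp only [map_one, inv_one, mul_one]
      exact N.one_mem
    · intro x y _ _ hx hy
      simp only [map_mul, mul_inv_rev]
      have e : x * y * ((α (β y))⁻¹ * (α (β x))⁻¹)
          = (x * (y * (α (β y))⁻¹) * x⁻¹) * (x * (α (β x))⁻¹) := by group
      rw [e]
      exact N.mul_mem (Subgroup.normalClosure_normal.conj_mem _ hy x) hx
    · intro x _ hx
      simp only [map_inv, inv_inv]
      have e : x⁻¹ * α (β x) = x⁻¹ * (x * (α (β x))⁻¹)⁻¹ * (x⁻¹)⁻¹ := by group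
      rw [e]
      exact Subgroup.normalClosure_normal.conj_mem _ (N.inv_mem hx) x⁻¹
  apply le_antisymm
  · intro w hw
    have hβw : β w ∈ Subgroup.normalClosure rels := by
      rw [← hker, MonoidHom.mem_ker, hβ]
      exact hw
    have hαβw : α (β w) ∈ N := by
      haveI : (N.comap α).Normal := Subgroup.normal_comap α
      have hle : Subgroup.normalClosure rels ≤ N.comap α := by
        apply Subgroup.normalClosure_le_normal
        intro r hr
        exact Subgroup.subset_normalClosure (Or.inl ⟨r, hr, rfl⟩)
      exact hle hβw
    have e : w = (w * (α (β w))⁻¹) * α (β w) := by group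
    rw [e]
    exact N.mul_mem (hT w) hαβw
  · apply Subgroup.normalClosure_le_normal
    rintro x (⟨r, hr, rfl⟩ | ⟨s, rfl⟩)
    · rw [SetLike.mem_coe, MonoidHom.mem_ker, hα]
      have : r ∈ φ.ker := by
        rw [hker]
        exact Subgroup.subset_normalClosure hr
      exact this
    · rw [SetLike.mem_coe, MonoidHom.mem_ker, map_mul, map_inv, hα, hβ]
      simp

end SBA7

section SBA8

open Finsupp

variable {G : Type} [Group G] {ι : Type} (ν : ι → G)

lemma bdry_swp (x : G) : bdryZ (swpC x : C1Z G) = 0 := by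
  rw [swpC, map_add, bdryZ_single, bdryZ_single]
  simp only [one_smul]
  abel

lemma conj_list_chains {R : Set (FreeGroup ι)} (hRker : ∀ r ∈ R, piH ν r = 1) :
    ∀ L : List (FreeGroup ι),
      (∀ x ∈ L, ∃ u r, r ∈ R ∧ (x = u * r * u⁻¹ ∨ x = u * r⁻¹ * u⁻¹)) →
      ∃ LP : List (G × C1Z G), LP.length = L.length ∧
        (∀ p ∈ LP, p.2 ∈ th ν '' (R ∪ Inv.inv '' R)) ∧
        th ν L.prod = (LP.map fun p => trE p.1 p.2).sum := by
  intro L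
  induction L with
  | nil => exact fun _ => ⟨[], rfl, by simp, by simp [th_one]⟩
  | cons x L ih =>
      intro hmem
      obtain ⟨u, r, hrR, hxe⟩ := hmem x (List.mem_cons_self)
      obtain ⟨LP', hlen', hmem', hsum'⟩ :=
        ih fun y hy => hmem y (List.mem_cons_of_mem x hy)
      have hπr : piH ν r = 1 := hRker r hrR
      have hπx : piH ν x = 1 := by
        rcases hxe with rfl | rfl <;> simp [hπr]
      rcases hxe with rfl | rfl
      · refine ⟨(piH ν u, th ν r) :: LP', by simp [hlen'], ?_, ?_⟩
        · intro p hp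
          rcases List.mem_cons.mp hp with rfl | hp
          · exact ⟨r, Or.inl hrR, rfl⟩
          · exact hmem' p hp
        · rw [List.prod_cons, th_mul, hπx, trE_one, hsum', List.map_cons,
            List.sum_cons, th_conj ν u r hπr]
      · refine ⟨(piH ν u, th ν r⁻¹) :: LP', by simp [hlen'], ?_, ?_⟩
        · intro p hp
          rcases List.mem_cons.mp hp with rfl | hp
          · exact ⟨r⁻¹, Or.inr ⟨r, hrR, rfl⟩, rfl⟩
          · exact hmem' p hp
        · rw [List.prod_cons, th_mul, hπx, trE_one, hsum', List.map_cons,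
            List.sum_cons, th_conj ν u r⁻¹ (by simp [hπr])]

lemma inner_sumE (g : G) (L : List (G × C1Z G)) :
    ((L.map fun p => ((g * p.1, p.2) : G × C1Z G)).map fun p => trE p.1 p.2).sum
      = trE g ((L.map fun p => trE p.1 p.2).sum) := by
  induction L with
  | nil => simp
  | cons p L ih =>
      simp only [List.map_cons, List.sum_cons, map_add, ih, trE_trE]

lemma list_to_fin (𝒞 : Set (C1Z G)) (h0 : (0 : C1Z G) ∈ 𝒞) :
    ∀ (LL : List (G × C1Z G)) (k : ℕ), LL.length ≤ k → (∀ p ∈ LL, p.2 ∈ 𝒞) →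
    ∃ (g : Fin k → G) (cc : Fin k → C1Z G), (∀ i, cc i ∈ 𝒞) ∧
      (LL.map fun p => trE p.1 p.2).sum = ∑ i, trE (g i) (cc i) := by
  intro LL
  induction LL with
  | nil =>
      intro k _ _
      refine ⟨fun _ => 1, fun _ => 0, fun _ => h0, ?_⟩
      simp
  | cons p LL ih =>
      intro k hk hmem
      rcases k with _ | k
      · simp at hk
      · obtain ⟨g', cc', hcc', hsum'⟩ := ih k (by simpa using hk)
          (fun q hq => hmem q (List.mem_cons_of_mem p hq))
        refine ⟨Fin.cons p.1 g', Fin.cons p.2 cc', ?_, ?_⟩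
        · intro i
          rcases Fin.eq_zero_or_eq_succ i with rfl | ⟨j, rfl⟩
          · simpa using hmem p (List.mem_cons_self)
          · simpa using hcc' j
        · rw [List.map_cons, List.sum_cons, Fin.sum_univ_succ]
          simp [hsum']

end SBA8

section SBA9

lemma flatten_length_le {A B : Type*} (W : List A) (F : A → List B) (D : ℕ)
    (h : ∀ w ∈ W, (F w).length ≤ D) : ((W.map F).flatten).length ≤ W.length * D := by
  induction W with
  | nil => simp
  | cons w W ih =>
      simp only [List.map_cons, List.flatten_cons, List.length_append, List.length_cons]
      have h1 := h w (List.mem_cons_self)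
      have h2 := ih fun x hx => h x (List.mem_cons_of_mem w hx)
      calc (F w).length + (List.map F W).flatten.length ≤ D + W.length * D := by omega
        _ = (W.length + 1) * D := by ring

lemma map_flatten_sum {A B M : Type*} [AddCommMonoid M] (W : List A) (F : A → List B)
    (f : B → M) (v : A → M) (h : ∀ w ∈ W, ((F w).map f).sum = v w) :
    (((W.map F).flatten).map f).sum = (W.map v).sum := by
  induction W with
  | nil => simp
  | cons w W ih =>
      simp only [List.map_cons, List.flatten_cons, List.map_append, List.sum_append,
        List.sum_cons]
      rw [h w (List.mem_cons_self), ih fun x hx => h x (List.mem_cons_of_mem w hx)]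

end SBA9

/-- a finitely presented group has S-bounded H² for every finite
generating set S: the ℤG-module of integral 1-cycles on Cay(G,S) is generated
by a collection 𝒞 of cycles of uniformly bounded ℓ¹-norm, with the number of
translates needed controlled by a function Δ of the ℓ¹-norm. -/
theorem finitely_presented_S_bounded_H2 (G : Type) [Group G]
    (hfp : IsFinitelyPresented G) (S : Finset G)
    (hgen : Subgroup.closure (S : Set G) = ⊤) :
    ∃ (𝒞 : Set ((G × G) →₀ ℤ)) (N : ℕ) (Δ : ℕ → ℕ),
      (∀ c ∈ 𝒞, IsCycleZ (S : Set G) c ∧ l1Z c ≤ N) ∧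
      (∀ c : (G × G) →₀ ℤ, IsCycleZ (S : Set G) c → ∀ n : ℕ, l1Z c ≤ n →
        ∃ k : ℕ, k ≤ Δ n ∧ ∃ (g : Fin k → G) (cc : Fin k → ((G × G) →₀ ℤ)),
          (∀ i, cc i ∈ 𝒞) ∧
          c = ∑ i, Finsupp.mapDomain
                (fun t => (g i * t.1, g i * t.2)) (cc i)) := by
  classical
  obtain ⟨nn, rels, hrelsfin, ⟨e⟩⟩ := hfp
  set ι := {x : G // x ∈ S.erase 1} with hι
  haveI : Fintype ι := FinsetCoe.fintype (S.erase 1)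
  set ν : ι → G := Subtype.val with hνdef
  have hν : ∀ s : ι, ν s ≠ 1 := fun s => (Finset.mem_erase.mp s.2).1
  have hνS : ∀ s : ι, ν s ∈ S := fun s => (Finset.mem_erase.mp s.2).2
  set π : FreeGroup ι →* G := piH ν with hπdef
  have hclosure : Subgroup.closure (((S.erase 1 : Finset G) : Set G)) = ⊤ := by
    rw [eq_top_iff, ← hgen]
    apply (Subgroup.closure_le _).mpr
    intro x hx
    by_cases hx1 : x = 1
    · subst hx1
      exact (Subgroup.closure _).one_mem
    · exact Subgroup.subset_closure
        (Finset.mem_coe.mpr (Finset.mem_erase.mpr ⟨hx1, Finset.mem_coe.mp hx⟩))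
  have hrange : Set.range ν = ((S.erase 1 : Finset G) : Set G) := by
    ext x
    constructor
    · rintro ⟨y, rfl⟩
      exact Finset.mem_coe.mpr y.2
    · intro hx
      exact ⟨⟨x, Finset.mem_coe.mp hx⟩, rfl⟩
  have hπsurj : Function.Surjective π := by
    rw [← MonoidHom.range_eq_top, hπdef, piH, FreeGroup.range_lift_eq_closure,
      hrange, hclosure]
  set φ : FreeGroup (Fin nn) →* G := e.toMonoidHom.comp (PresentedGroup.mk rels)
    with hφdef
  have hφsurj : Function.Surjective φ :=
    e.surjective.comp (PresentedGroup.mk_surjective rels)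
  have hφker : φ.ker = Subgroup.normalClosure rels := by
    ext x
    rw [MonoidHom.mem_ker, hφdef, MonoidHom.comp_apply,
      show e.toMonoidHom (PresentedGroup.mk rels x) = e (PresentedGroup.mk rels x)
        from rfl,
      MulEquiv.map_eq_one_iff]
    exact QuotientGroup.eq_one_iff x
  obtain ⟨α, β, hkerπ⟩ := ker_change_gens φ π hφsurj hπsurj rels hφker
  set R : Set (FreeGroup ι) := (α '' rels) ∪
    Set.range (fun s : ι => FreeGroup.of s * (α (β (FreeGroup.of s)))⁻¹) with hRdef
  have hRfin : R.Finite := (hrelsfin.image α).union (Set.finite_range _)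
  have hRker : ∀ r ∈ R, piH ν r = 1 := by
    intro r hr
    have hmem : r ∈ π.ker := by
      rw [hkerπ]
      exact Subgroup.subset_normalClosure hr
    exact MonoidHom.mem_ker.mp hmem
  set RelCh : Set (C1Z G) := th ν '' (R ∪ Inv.inv '' R) with hRelChdef
  set 𝒞 : Set ((G × G) →₀ ℤ) := (RelCh ∪
    ((Set.range fun s : ι => swpC (ν s)) ∪ (Set.range fun s : ι => -swpC (ν s)))) ∪ {0}
    with h𝒞def
  have h0𝒞 : (0 : C1Z G) ∈ 𝒞 := by
    rw [h𝒞def]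
    right
    rfl
  have h𝒞fin : 𝒞.Finite := by
    refine Set.Finite.union (Set.Finite.union ?_ ?_) (Set.finite_singleton _)
    · exact (hRfin.union (hRfin.image _)).image _
    · exact (Set.finite_range _).union (Set.finite_range _)
  set N : ℕ := h𝒞fin.toFinset.sup l1Z with hNdef
  have hposAdj : ∀ c : C1Z G, posOr ν c →
      ∀ t ∈ c.support, (cayley (S : Set G)).Adj t.1 t.2 := by
    intro c hp t ht
    obtain ⟨s, hs⟩ := hp t ht
    refine (show _ ≠ _ ∧ ∃ s' ∈ (S : Set G), _ ∨ _ from ⟨?_, ν s, hνS s, Or.inl hs⟩)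
    intro h12
    rw [h12] at hs
    exact hν s (left_eq_mul.mp hs)
  have hswpAdj : ∀ s : ι, ∀ t ∈ (swpC (ν s) : C1Z G).support,
      (cayley (S : Set G)).Adj t.1 t.2 := by
    intro s t ht
    have hne : ν s ≠ 1 := hν s
    rcases Finset.mem_union.mp (Finsupp.support_add ht) with h | h
    · have := Finsupp.support_single_subset h
      simp only [Finset.mem_singleton] at this
      subst this
      exact (show _ ≠ _ ∧ ∃ s' ∈ (S : Set G), _ ∨ _ from ⟨fun h => hne h.symm, ν s, hνS s, Or.inl (one_mul _).symm⟩)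
    · have := Finsupp.support_single_subset h
      simp only [Finset.mem_singleton] at this
      subst this
      exact (show _ ≠ _ ∧ ∃ s' ∈ (S : Set G), _ ∨ _ from ⟨hne, ν s, hνS s, Or.inr (one_mul _).symm⟩)
  have h𝒞cyc : ∀ c ∈ 𝒞, IsCycleZ (S : Set G) c ∧ l1Z c ≤ N := by
    intro c hc
    constructor
    · rcases hc with ((⟨r, hrmem, rfl⟩ | (⟨s, rfl⟩ | ⟨s, rfl⟩)) | hc0)
      · have hπr : piH ν r = 1 := by
          rcases hrmem with hr | ⟨r', hr', rfl⟩
          · exact hRker r hr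
          · rw [map_inv, hRker r' hr', inv_one]
        refine ⟨hposAdj _ (posOr_th ν r), ?_⟩
        rw [bdryZ_th, hπr, sub_self]
      · exact ⟨hswpAdj s, bdry_swp (ν s)⟩
      · refine ⟨?_, by rw [map_neg, bdry_swp, neg_zero]⟩
        intro t ht
        rw [Finsupp.support_neg] at ht
        exact hswpAdj s t ht
      · rw [Set.mem_singleton_iff.mp hc0]
        exact ⟨by simp, map_zero _⟩
    · exact Finset.le_sup (h𝒞fin.mem_toFinset.mpr hc)
  have hKLex : ∀ v : FreeGroup ι, ∃ LP : List (G × C1Z G),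
      piH ν v = 1 → ((∀ p ∈ LP, p.2 ∈ RelCh) ∧
        th ν v = (LP.map fun p => trE p.1 p.2).sum) := by
    intro v
    by_cases hv : piH ν v = 1
    · have hvN : v ∈ Subgroup.normalClosure R := by
        rw [← hkerπ]
        exact MonoidHom.mem_ker.mpr hv
      obtain ⟨L, hLmem, hLprod⟩ := mem_normalClosure_list hvN
      obtain ⟨LP, _, hLPmem, hLPsum⟩ := conj_list_chains ν hRker L hLmem
      exact ⟨LP, fun _ => ⟨hLPmem, by rw [← hLprod]; exact hLPsum⟩⟩
    · exact ⟨[], fun h => absurd h hv⟩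
  choose KL hKL using hKLex
  refine ⟨𝒞, N, fun n => n * ((List.finite_length_le (ι × Bool) n).toFinset.sup
    fun l => (KL (FreeGroup.mk l)).length) + n, h𝒞cyc, ?_⟩
  intro c hcyc n hn
  set D : ℕ := (List.finite_length_le (ι × Bool) n).toFinset.sup
    fun l => (KL (FreeGroup.mk l)).length with hDdef
  refine ⟨n * D + n, le_rfl, ?_⟩
  have hadjor : ∀ t ∈ c.support,
      (∃ s : ι, t.2 = t.1 * ν s) ∨ (∃ s : ι, t.1 = t.2 * ν s) := by
    intro t ht
    obtain ⟨hne, s, hsS, h | h⟩ := hcyc.1 t ht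
    · have hs1 : s ≠ 1 := by
        rintro rfl
        rw [mul_one] at h
        exact hne h.symm
      exact Or.inl ⟨⟨s, Finset.mem_erase.mpr ⟨hs1, hsS⟩⟩, h⟩
    · have hs1 : s ≠ 1 := by
        rintro rfl
        rw [mul_one] at h
        exact hne h
      exact Or.inr ⟨⟨s, Finset.mem_erase.mpr ⟨hs1, hsS⟩⟩, h⟩
  obtain ⟨c', SW, hposc', hl1c', hSWlen, hSWmem, heq⟩ :=
    orient ν hν (badM ν c) c hadjor rfl
  have hswsum0 : bdryZ ((SW.map fun x => trE x.1 x.2).sum) = 0 := by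
    rw [map_list_sum]
    apply List.sum_eq_zero
    intro y hy
    rw [List.map_map, List.mem_map] at hy
    obtain ⟨p, hp, rfl⟩ := hy
    obtain ⟨s, hps | hps⟩ := hSWmem p hp
    · show bdryZ (trE p.1 p.2) = 0
      rw [hps, bdryZ_trE, bdry_swp, map_zero]
    · show bdryZ (trE p.1 p.2) = 0
      rw [hps, map_neg, map_neg, bdryZ_trE, bdry_swp, map_zero, neg_zero]
  have hbc' : bdryZ c' = 0 := by
    have h2 : bdryZ c = bdryZ c' + bdryZ ((SW.map fun x => trE x.1 x.2).sum) := by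
      rw [← map_add, ← heq]
    rw [hcyc.2, hswsum0, add_zero] at h2
    exact h2.symm
  have hl1n : l1Z' c' ≤ n := le_trans hl1c' hn
  obtain ⟨W, hWlen, hWmem, hWsum⟩ := decomp ν hν n c' hposc' hbc' hl1n
  set LL : List (G × C1Z G) := (W.map fun w =>
    (KL (FreeGroup.mk w.2)).map fun p => ((w.1 * p.1, p.2) : G × C1Z G)).flatten ++ SW
    with hLLdef
  have hKLgood : ∀ w ∈ W, (∀ p ∈ KL (FreeGroup.mk w.2), p.2 ∈ RelCh) ∧
      th ν (FreeGroup.mk w.2) =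
        ((KL (FreeGroup.mk w.2)).map fun p => trE p.1 p.2).sum :=
    fun w hw => hKL _ ((hWmem w hw).2)
  have hKLlen : ∀ w ∈ W, (KL (FreeGroup.mk w.2)).length ≤ D := by
    intro w hw
    rw [hDdef]
    exact Finset.le_sup (f := fun l => (KL (FreeGroup.mk l)).length)
      ((List.finite_length_le (ι × Bool) n).mem_toFinset.mpr ((hWmem w hw).1))
  have hLLlen : LL.length ≤ n * D + n := by
    rw [hLLdef, List.length_append]
    have h1 : (W.map fun w =>
        (KL (FreeGroup.mk w.2)).map fun p => ((w.1 * p.1, p.2) : G × C1Z G)).flatten.length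
        ≤ W.length * D := by
      apply flatten_length_le
      intro w hw
      rw [List.length_map]
      exact hKLlen w hw
    have h2 : SW.length ≤ n := le_trans hSWlen (le_trans (badM_le_l1Z ν c) hn)
    have h3 : W.length * D ≤ n * D := Nat.mul_le_mul_right D hWlen
    omega
  have hLLmem : ∀ p ∈ LL, p.2 ∈ 𝒞 := by
    intro p hp
    rw [hLLdef, List.mem_append] at hp
    rcases hp with hp | hp
    · rw [List.mem_flatten] at hp
      obtain ⟨l, hl, hpl⟩ := hp
      rw [List.mem_map] at hl
      obtain ⟨w, hw, rfl⟩ := hl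
      rw [List.mem_map] at hpl
      obtain ⟨q, hq, rfl⟩ := hpl
      have := (hKLgood w hw).1 q hq
      rw [h𝒞def]
      exact Or.inl (Or.inl this)
    · obtain ⟨s, hps | hps⟩ := hSWmem p hp
      · rw [h𝒞def]
        exact Or.inl (Or.inr (Or.inl ⟨s, hps.symm⟩))
      · rw [h𝒞def]
        exact Or.inl (Or.inr (Or.inr ⟨s, hps.symm⟩))
  have hLLsum : (LL.map fun p => trE p.1 p.2).sum = c := by
    rw [hLLdef, List.map_append, List.sum_append]
    have hflat : (((W.map fun w =>
        (KL (FreeGroup.mk w.2)).map fun p => ((w.1 * p.1, p.2) : G × C1Z G)).flatten).map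
          fun p => trE p.1 p.2).sum = c' := by
      rw [map_flatten_sum W _ _ (fun w => trE w.1 (th ν (FreeGroup.mk w.2))) ?_]
      · exact hWsum.symm
      · intro w hw
        rw [inner_sumE, ← (hKLgood w hw).2]
    rw [hflat, heq]
  obtain ⟨g, cc, hccmem, hfin⟩ := list_to_fin 𝒞 h0𝒞 LL (n * D + n) hLLlen hLLmem
  refine ⟨g, cc, hccmem, ?_⟩
  rw [← hLLsum, hfin]
  rfl
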